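/- Let $A_1, A_2$ be integer points with $\gcd$-one coordinates on the diagonal cubic surface $a x^3 + b y^3 + c z^3 + d u^3 = 0$ with nonzero integers $a,b,c,d$, $K = \max\{|a|,|b|,|c|,|d|\}$, and define $h_{sum}(P) = |x|+|y|+|z|+|u|$. Then the composition point $(\alpha x_1 - \beta x_2, \alpha y_1 - \beta y_2, \alpha z_1 - \beta z_2, \alpha u_1 - \beta u_2)$ (with $\alpha, \beta$ as in the secant formula) satisfies $h_{sum}(A_1 \circ A_2) \le 2 K \cdot h_{sum}(A_1)^2 \cdot h_{sum}(A_2)^2 \cdot \max\{h_{sum}(A_1), h_{sum}(A_2)\}$. -/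

import Mathlib

theorem secant_aux (K a b c d x1 y1 z1 u1 x2 y2 z2 u2 : ℤ)
    (hKa : |a| ≤ K) (hKb : |b| ≤ K) (hKc : |c| ≤ K) (hKd : |d| ≤ K)
    (hH1 : 1 ≤ |x1| + |y1| + |z1| + |u1|) :
    |(a * x1 * x2^2 + b * y1 * y2^2 + c * z1 * z2^2 + d * u1 * u2^2) * x1 -
      (a * x1^2 * x2 + b * y1^2 * y2 + c * z1^2 * z2 + d * u1^2 * u2) * x2| +
    |(a * x1 * x2^2 + b * y1 * y2^2 + c * z1 * z2^2 + d * u1 * u2^2) * y1 -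
      (a * x1^2 * x2 + b * y1^2 * y2 + c * z1^2 * z2 + d * u1^2 * u2) * y2| +
    |(a * x1 * x2^2 + b * y1 * y2^2 + c * z1 * z2^2 + d * u1 * u2^2) * z1 -
      (a * x1^2 * x2 + b * y1^2 * y2 + c * z1^2 * z2 + d * u1^2 * u2) * z2| +
    |(a * x1 * x2^2 + b * y1 * y2^2 + c * z1 * z2^2 + d * u1 * u2^2) * u1 -
      (a * x1^2 * x2 + b * y1^2 * y2 + c * z1^2 * z2 + d * u1^2 * u2) * u2|
    ≤ 2 * K * (|x1| + |y1| + |z1| + |u1|)^2 * (|x2| + |y2| + |z2| + |u2|)^2 *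
        max (|x1| + |y1| + |z1| + |u1|) (|x2| + |y2| + |z2| + |u2|) := by
  have hK0 : 0 ≤ K := le_trans (abs_nonneg a) hKa
  have nx1 := abs_nonneg x1; have ny1 := abs_nonneg y1
  have nz1 := abs_nonneg z1; have nu1 := abs_nonneg u1
  have nx2 := abs_nonneg x2; have ny2 := abs_nonneg y2
  have nz2 := abs_nonneg z2; have nu2 := abs_nonneg u2
  obtain ⟨H1, hH1d⟩ : ∃ t : ℤ, t = |x1| + |y1| + |z1| + |u1| := ⟨_, rfl⟩
  obtain ⟨H2, hH2d⟩ : ∃ t : ℤ, t = |x2| + |y2| + |z2| + |u2| := ⟨_, rfl⟩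
  obtain ⟨α, hαd⟩ : ∃ t : ℤ, t = a * x1 * x2^2 + b * y1 * y2^2 + c * z1 * z2^2 + d * u1 * u2^2 :=
    ⟨_, rfl⟩
  obtain ⟨β, hβd⟩ : ∃ t : ℤ, t = a * x1^2 * x2 + b * y1^2 * y2 + c * z1^2 * z2 + d * u1^2 * u2 :=
    ⟨_, rfl⟩
  rw [← hH1d, ← hH2d, ← hαd, ← hβd]
  rw [← hH1d] at hH1
  have hH1nn : 0 ≤ H1 := by rw [hH1d]; positivity
  have hH2nn : 0 ≤ H2 := by rw [hH2d]; positivity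
  have hx1H : |x1| ≤ H1 := by rw [hH1d]; linarith
  have hy1H : |y1| ≤ H1 := by rw [hH1d]; linarith
  have hz1H : |z1| ≤ H1 := by rw [hH1d]; linarith
  have hu1H : |u1| ≤ H1 := by rw [hH1d]; linarith
  have hx2H : |x2| ≤ H2 := by rw [hH2d]; linarith
  have hy2H : |y2| ≤ H2 := by rw [hH2d]; linarith
  have hz2H : |z2| ≤ H2 := by rw [hH2d]; linarith
  have hu2H : |u2| ≤ H2 := by rw [hH2d]; linarith
  -- bound on α
  have hα : |α| ≤ K * H1 * H2^2 := by
    have t1 : |α| ≤ |a| * |x1| * |x2|^2 + |b| * |y1| * |y2|^2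
        + |c| * |z1| * |z2|^2 + |d| * |u1| * |u2|^2 := by
      rw [hαd]
      calc |a * x1 * x2^2 + b * y1 * y2^2 + c * z1 * z2^2 + d * u1 * u2^2|
          ≤ |a * x1 * x2^2 + b * y1 * y2^2 + c * z1 * z2^2| + |d * u1 * u2^2| := abs_add_le _ _
        _ ≤ (|a * x1 * x2^2 + b * y1 * y2^2| + |c * z1 * z2^2|) + |d * u1 * u2^2| :=
            add_le_add_left (abs_add_le _ _) _
        _ ≤ ((|a * x1 * x2^2| + |b * y1 * y2^2|) + |c * z1 * z2^2|) + |d * u1 * u2^2| :=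
            add_le_add_left (add_le_add_left (abs_add_le _ _) _) _
        _ = |a| * |x1| * |x2|^2 + |b| * |y1| * |y2|^2
            + |c| * |z1| * |z2|^2 + |d| * |u1| * |u2|^2 := by
            simp only [abs_mul, abs_pow]
    have e1 : |a| * |x1| * |x2|^2 ≤ K * (|x1| * H2^2) := by rw [mul_assoc]; gcongr
    have e2 : |b| * |y1| * |y2|^2 ≤ K * (|y1| * H2^2) := by rw [mul_assoc]; gcongr
    have e3 : |c| * |z1| * |z2|^2 ≤ K * (|z1| * H2^2) := by rw [mul_assoc]; gcongr
    have e4 : |d| * |u1| * |u2|^2 ≤ K * (|u1| * H2^2) := by rw [mul_assoc]; gcongr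
    have e5 : K * (|x1| * H2^2) + K * (|y1| * H2^2) + K * (|z1| * H2^2) + K * (|u1| * H2^2)
        = K * H1 * H2^2 := by rw [hH1d]; ring
    linarith
  -- bound on β
  have hβ : |β| ≤ K * H1^2 * H2 := by
    have t1 : |β| ≤ |a| * |x1|^2 * |x2| + |b| * |y1|^2 * |y2|
        + |c| * |z1|^2 * |z2| + |d| * |u1|^2 * |u2| := by
      rw [hβd]
      calc |a * x1^2 * x2 + b * y1^2 * y2 + c * z1^2 * z2 + d * u1^2 * u2|
          ≤ |a * x1^2 * x2 + b * y1^2 * y2 + c * z1^2 * z2| + |d * u1^2 * u2| := abs_add_le _ _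
        _ ≤ (|a * x1^2 * x2 + b * y1^2 * y2| + |c * z1^2 * z2|) + |d * u1^2 * u2| :=
            add_le_add_left (abs_add_le _ _) _
        _ ≤ ((|a * x1^2 * x2| + |b * y1^2 * y2|) + |c * z1^2 * z2|) + |d * u1^2 * u2| :=
            add_le_add_left (add_le_add_left (abs_add_le _ _) _) _
        _ = |a| * |x1|^2 * |x2| + |b| * |y1|^2 * |y2|
            + |c| * |z1|^2 * |z2| + |d| * |u1|^2 * |u2| := by
            simp only [abs_mul, abs_pow]
    have e1 : |a| * |x1|^2 * |x2| ≤ K * (H1^2 * |x2|) := by rw [mul_assoc]; gcongr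
    have e2 : |b| * |y1|^2 * |y2| ≤ K * (H1^2 * |y2|) := by rw [mul_assoc]; gcongr
    have e3 : |c| * |z1|^2 * |z2| ≤ K * (H1^2 * |z2|) := by rw [mul_assoc]; gcongr
    have e4 : |d| * |u1|^2 * |u2| ≤ K * (H1^2 * |u2|) := by rw [mul_assoc]; gcongr
    have e5 : K * (H1^2 * |x2|) + K * (H1^2 * |y2|) + K * (H1^2 * |z2|) + K * (H1^2 * |u2|)
        = K * H1^2 * H2 := by rw [hH2d]; ring
    linarith
  -- triangle inequality on each coordinate
  have tri : ∀ p q : ℤ, |α * p - β * q| ≤ |α| * |p| + |β| * |q| := fun p q => by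
    calc |α * p - β * q| ≤ |α * p| + |β * q| := abs_sub _ _
      _ = |α| * |p| + |β| * |q| := by rw [abs_mul, abs_mul]
  have t1 := tri x1 x2
  have t2 := tri y1 y2
  have t3 := tri z1 z2
  have t4 := tri u1 u2
  have hαnn := abs_nonneg α
  have hβnn := abs_nonneg β
  have esum : |α| * |x1| + |β| * |x2| + (|α| * |y1| + |β| * |y2|)
      + (|α| * |z1| + |β| * |z2|) + (|α| * |u1| + |β| * |u2|)
      = |α| * H1 + |β| * H2 := by rw [hH1d, hH2d]; ring
  have hαH : |α| * H1 ≤ K * H1^2 * H2^2 := by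
    calc |α| * H1 ≤ (K * H1 * H2^2) * H1 := mul_le_mul_of_nonneg_right hα hH1nn
      _ = K * H1^2 * H2^2 := by ring
  have hβH : |β| * H2 ≤ K * H1^2 * H2^2 := by
    calc |β| * H2 ≤ (K * H1^2 * H2) * H2 := mul_le_mul_of_nonneg_right hβ hH2nn
      _ = K * H1^2 * H2^2 := by ring
  have hmax : 1 ≤ max H1 H2 := le_trans hH1 (le_max_left _ _)
  have base_nn : 0 ≤ 2 * K * H1^2 * H2^2 := by
    have h2K : (0:ℤ) ≤ 2 * K := by linarith
    exact mul_nonneg (mul_nonneg h2K (sq_nonneg H1)) (sq_nonneg H2)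
  have hfin : 2 * K * H1^2 * H2^2 ≤ 2 * K * H1^2 * H2^2 * max H1 H2 :=
    le_mul_of_one_le_right base_nn hmax
  linarith

theorem secant_composition_hsum_bound
    (a b c d x1 y1 z1 u1 x2 y2 z2 u2 : ℤ)
    (ha : a ≠ 0) (hb : b ≠ 0) (hc : c ≠ 0) (hd : d ≠ 0)
    (hg1 : Int.gcd (Int.gcd (Int.gcd x1 y1) z1) u1 = 1)
    (hg2 : Int.gcd (Int.gcd (Int.gcd x2 y2) z2) u2 = 1)
    (h1 : a * x1^3 + b * y1^3 + c * z1^3 + d * u1^3 = 0)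
    (h2 : a * x2^3 + b * y2^3 + c * z2^3 + d * u2^3 = 0) :
    let K := max (max |a| |b|) (max |c| |d|)
    let H1 := |x1| + |y1| + |z1| + |u1|
    let H2 := |x2| + |y2| + |z2| + |u2|
    let α := a * x1 * x2^2 + b * y1 * y2^2 + c * z1 * z2^2 + d * u1 * u2^2
    let β := a * x1^2 * x2 + b * y1^2 * y2 + c * z1^2 * z2 + d * u1^2 * u2
    |α * x1 - β * x2| + |α * y1 - β * y2| + |α * z1 - β * z2| + |α * u1 - β * u2|
      ≤ 2 * K * H1^2 * H2^2 * max H1 H2 := by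
  intro K H1 H2 α β
  have hKa : |a| ≤ K := le_trans (le_max_left _ _) (le_max_left _ _)
  have hKb : |b| ≤ K := le_trans (le_max_right _ _) (le_max_left _ _)
  have hKc : |c| ≤ K := le_trans (le_max_left _ _) (le_max_right _ _)
  have hKd : |d| ≤ K := le_trans (le_max_right _ _) (le_max_right _ _)
  have hH1 : 1 ≤ |x1| + |y1| + |z1| + |u1| := by
    have hne : x1 ≠ 0 ∨ y1 ≠ 0 ∨ z1 ≠ 0 ∨ u1 ≠ 0 := by
      by_contra h
      push_neg at h
      obtain ⟨hx, hy, hz, hu⟩ := h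
      simp [hx, hy, hz, hu] at hg1
    have nx1 := abs_nonneg x1; have ny1 := abs_nonneg y1
    have nz1 := abs_nonneg z1; have nu1 := abs_nonneg u1
    rcases hne with h | h | h | h <;> have := Int.one_le_abs h <;> linarith
  exact secant_aux K a b c d x1 y1 z1 u1 x2 y2 z2 u2 hKa hKb hKc hKd hH1
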